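/- Let M be a smooth embedded hypersurface in R^{n+1} given by an embedding F with unit normal ν, and define μ(x) = sup over y ≠ x of 2⟨F(x)−F(y), ν(x)⟩/|F(x)−F(y)|². Then every principal curvature λ_i(x) of M at x satisfies λ_i(x) ≤ μ(x); in particular the largest principal curvature λ_n(x) ≤ μ(x). -/

import Mathlib

open Filter Topology
/-- Second derivative test at a global max. -/
lemma aux_second {f D : ℝ → ℝ} {L : ℝ}
    (hmax : ∀ t, f t ≤ f 0)
    (hfD : ∀ t, HasDerivAt f (D t) t)
    (hD0 : D 0 = 0)
    (hDL : HasDerivAt D L 0) : L ≤ 0 := by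
  by_contra h
  push_neg at h
  -- slope of D at 0 tends to L > 0, so D t > 0 for small t > 0
  have hslope := hasDerivAt_iff_tendsto_slope.1 hDL
  have hev : ∀ᶠ t in 𝓝[≠] (0:ℝ), 0 < slope D 0 t :=
    hslope.eventually (eventually_gt_nhds h)
  have hev' : ∀ᶠ t in 𝓝[>] (0:ℝ), 0 < D t := by
    have : 𝓝[>] (0:ℝ) ≤ 𝓝[≠] (0:ℝ) :=
      nhdsWithin_mono _ (fun t ht => ne_of_gt ht)
    filter_upwards [(this hev : ∀ᶠ t in 𝓝[>] (0:ℝ), 0 < slope D 0 t),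
      self_mem_nhdsWithin] with t ht ht0
    have : slope D 0 t = D t / t := by simp [slope, hD0, inv_mul_eq_div]
    rw [this] at ht
    have := mul_pos ht ht0
    rwa [div_mul_cancel₀ _ (ne_of_gt ht0)] at this
  obtain ⟨δ, hδ, hδD⟩ := (nhdsGT_basis (0:ℝ)).eventually_iff.1 hev'
  -- f strictly increasing on [0, δ]
  have hmono : StrictMonoOn f (Set.Icc 0 δ) := by
    apply strictMonoOn_of_deriv_pos (convex_Icc 0 δ)
    · exact fun t _ => (hfD t).differentiableAt.continuousAt.continuousWithinAt
    · intro t ht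
      rw [interior_Icc] at ht
      rw [(hfD t).deriv]
      exact hδD ht
  have : f 0 < f δ := hmono (by simp [le_of_lt hδ]) (by simp [le_of_lt hδ, hδ]) hδ
  exact absurd (hmax δ) (not_le.2 this)


/-- Every principal curvature (realized as the normal curvature `-⟨c''(0), ν x⟩` of a
unit-speed-at-0 curve in the hypersurface, tangent at `x`, with outward unit normal `ν`)
is bounded above by `μ(x)`, the reciprocal of the inscribed radius
`μ(x) = sup_{y ≠ x} 2⟨F(x)−F(y), ν(x)⟩/|F(x)−F(y)|²`. -/
theorem stmt0 {n : ℕ} {M : Type*}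
    (F : M → EuclideanSpace ℝ (Fin (n + 1)))
    (ν : M → EuclideanSpace ℝ (Fin (n + 1)))
    (hF : Function.Injective F)
    (x : M) (hν : ‖ν x‖ = 1)
    (μ : ℝ)
    (hμ : IsLUB {r : ℝ | ∃ y : M, y ≠ x ∧
      r = 2 * (inner ℝ (F x - F y) (ν x) : ℝ) / ‖F x - F y‖ ^ 2} μ)
    (lam : ℝ) (c : ℝ → EuclideanSpace ℝ (Fin (n + 1)))
    (hc : ContDiff ℝ 2 c)
    (hrange : ∀ t, c t ∈ Set.range F)
    (hc0 : c 0 = F x)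
    (hunit : ‖deriv c 0‖ = 1)
    (htang : (inner ℝ (deriv c 0) (ν x) : ℝ) = 0)
    (hlam : lam = -(inner ℝ (deriv (deriv c) 0) (ν x) : ℝ)) :
    lam ≤ μ := by
  set v := deriv c 0 with hv
  set a := deriv (deriv c) 0 with ha
  -- smoothness facts
  have hc2 : ContDiff ℝ (1 + 1) c := by rw [one_add_one_eq_two]; exact hc
  have hsplit := contDiff_succ_iff_deriv.1 hc2
  have hcdiff : Differentiable ℝ c := hsplit.1
  have hc' : ∀ t, HasDerivAt c (deriv c t) t := fun t => (hcdiff t).hasDerivAt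
  have hdc : ContDiff ℝ 1 (deriv c) := hsplit.2.2
  have hdc' : HasDerivAt (deriv c) a 0 :=
    (hdc.differentiable one_ne_zero 0).hasDerivAt
  -- the test function and its derivative
  set f : ℝ → ℝ := fun t => 2 * (inner ℝ (F x - c t) (ν x) : ℝ) - μ * (inner ℝ (F x - c t) (F x - c t) : ℝ) with hfdef
  set D : ℝ → ℝ := fun t =>
    -2 * (inner ℝ (deriv c t) (ν x) : ℝ) + 2 * μ * (inner ℝ (deriv c t) (F x - c t) : ℝ) with hDdef
  have hg : ∀ t, HasDerivAt (fun t => F x - c t) (-(deriv c t)) t :=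
    fun t => (hc' t).const_sub (F x)
  have hfD : ∀ t, HasDerivAt f (D t) t := by
    intro t
    have h1 := HasDerivAt.inner ℝ (hg t) (hasDerivAt_const t (ν x))
    have h2 := HasDerivAt.inner ℝ (hg t) (hg t)
    have := ((h1.const_mul (2:ℝ)).sub (h2.const_mul μ))
    refine this.congr_deriv ?_
    simp only [inner_zero_right, inner_neg_left, inner_neg_right,
      real_inner_comm (deriv c t) (F x - c t)]
    ring
  have hg0 : F x - c 0 = 0 := by rw [hc0]; simp
  have hD0 : D 0 = 0 := by
    have h : D 0 = -2 * (inner ℝ v (ν x) : ℝ) + 2 * μ * (inner ℝ v (F x - c 0) : ℝ) := rfl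
    rw [h, hg0, htang, inner_zero_right]; ring
  have hDL : HasDerivAt D (2 * lam - 2 * μ) 0 := by
    have h1 := HasDerivAt.inner ℝ hdc' (hasDerivAt_const (0:ℝ) (ν x))
    have h2 := HasDerivAt.inner ℝ hdc' (hg 0)
    have := ((h1.const_mul (-2:ℝ)).add (h2.const_mul (2 * μ)))
    refine this.congr_deriv ?_
    have hvv : (inner ℝ v v : ℝ) = 1 := by
      rw [real_inner_self_eq_norm_sq, hunit]; norm_num
    simp only [inner_zero_right, hg0, inner_zero_left, inner_neg_right, ← hv, hvv, hlam]
    ring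
  -- f has a global max at 0
  have hmax : ∀ t, f t ≤ f 0 := by
    intro t
    have hf0 : f 0 = 0 := by
      have h : f 0 = 2 * (inner ℝ (F x - c 0) (ν x) : ℝ)
          - μ * (inner ℝ (F x - c 0) (F x - c 0) : ℝ) := rfl
      rw [h, hg0]; simp
    rw [hf0]
    obtain ⟨y, hy⟩ := hrange t
    have hft : f t = 2 * (inner ℝ (F x - F y) (ν x) : ℝ)
        - μ * (inner ℝ (F x - F y) (F x - F y) : ℝ) := by rw [hy]
    rw [hft]
    by_cases hyx : y = x
    · subst hyx; simp
    · have hmem : 2 * (inner ℝ (F x - F y) (ν x) : ℝ) / ‖F x - F y‖ ^ 2 ≤ μ :=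
        hμ.1 ⟨y, hyx, rfl⟩
      have hne : F x - F y ≠ 0 := sub_ne_zero.2 fun h => hyx (hF h.symm)
      have hpos : (0:ℝ) < ‖F x - F y‖ ^ 2 := pow_pos (norm_pos_iff.mpr hne) 2
      rw [div_le_iff₀ hpos] at hmem
      have hq : (inner ℝ (F x - F y) (F x - F y) : ℝ) = ‖F x - F y‖ ^ 2 :=
        real_inner_self_eq_norm_sq _
      rw [hq]
      linarith
  have := aux_second hmax hfD hD0 hDL
  linarith
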